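/- Let Ã, Ã' be n×n symmetric real matrices with operator norms at most 1, let W₁, …, W_T be real matrices, σ a 1-Lipschitz function applied entrywise with σ(0)=0, and define layer maps H_{ℓ}(B) recursively by H₀(B) = H₀ and H_{ℓ+1}(B) = σ(B · H_ℓ(B) · W_{ℓ+1}) for B ∈ {Ã, Ã'}. Then ‖H_T(Ã') − H_T(Ã)‖₂ ≤ T · ‖Ã' − Ã‖₂ · (∏_{ℓ=1}^T ‖W_ℓ‖₂) · ‖H₀‖₂. -/
import Mathlib


open Finset Matrix

/-- Spectral (operator) norm of a real square matrix. -/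
noncomputable def opN {n : ℕ} (M : Matrix (Fin n) (Fin n) ℝ) : ℝ :=
  ‖Matrix.toEuclideanCLM (𝕜 := ℝ) M‖

/-- Frobenius norm of a real square matrix. -/
noncomputable def frobN {n : ℕ} (M : Matrix (Fin n) (Fin n) ℝ) : ℝ :=
  Real.sqrt (∑ i, ∑ j, (M i j) ^ 2)

open scoped Matrix.Norms.L2Operator

lemma opN_eq {n : ℕ} (M : Matrix (Fin n) (Fin n) ℝ) : opN M = ‖M‖ := rfl

lemma opN_nonneg {n : ℕ} (M : Matrix (Fin n) (Fin n) ℝ) : 0 ≤ opN M := by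
  rw [opN_eq]; exact norm_nonneg _

lemma frobN_nonneg {n : ℕ} (M : Matrix (Fin n) (Fin n) ℝ) : 0 ≤ frobN M :=
  Real.sqrt_nonneg _

lemma frobN_sq {n : ℕ} (M : Matrix (Fin n) (Fin n) ℝ) :
    frobN M ^ 2 = ∑ i, ∑ j, (M i j) ^ 2 := by
  rw [frobN, Real.sq_sqrt]
  positivity

/-- Frobenius norm as a Euclidean norm. -/
lemma frobN_eq_norm {n : ℕ} (M : Matrix (Fin n) (Fin n) ℝ) :
    frobN M = ‖(WithLp.equiv 2 (Fin n × Fin n → ℝ)).symm (fun p => M p.1 p.2)‖ := by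
  rw [frobN, EuclideanSpace.norm_eq]
  congr 1
  rw [Fintype.sum_prod_type]
  refine Finset.sum_congr rfl fun i _ => Finset.sum_congr rfl fun j _ => ?_
  simp [sq_abs, Real.norm_eq_abs]

lemma frobN_add_le {n : ℕ} (X Y : Matrix (Fin n) (Fin n) ℝ) :
    frobN (X + Y) ≤ frobN X + frobN Y := by
  rw [frobN_eq_norm, frobN_eq_norm, frobN_eq_norm]
  have : (WithLp.equiv 2 (Fin n × Fin n → ℝ)).symm (fun p => (X + Y) p.1 p.2)
      = (WithLp.equiv 2 (Fin n × Fin n → ℝ)).symm (fun p => X p.1 p.2)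
        + (WithLp.equiv 2 (Fin n × Fin n → ℝ)).symm (fun p => Y p.1 p.2) := by
    ext p; simp
  rw [this]
  exact norm_add_le _ _

lemma frobN_transpose {n : ℕ} (M : Matrix (Fin n) (Fin n) ℝ) :
    frobN Mᵀ = frobN M := by
  rw [frobN, frobN, Finset.sum_comm]
  simp [Matrix.transpose_apply]

lemma opN_transpose {n : ℕ} (M : Matrix (Fin n) (Fin n) ℝ) :
    opN Mᵀ = opN M := by
  have h : Mᴴ = Mᵀ := by
    ext i j; simp [Matrix.conjTranspose_apply]
  rw [opN_eq, opN_eq, ← h]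
  exact Matrix.l2_opNorm_conjTranspose M

lemma frobN_mul_left {n : ℕ} (M N : Matrix (Fin n) (Fin n) ℝ) :
    frobN (M * N) ≤ opN M * frobN N := by
  have hrhs : 0 ≤ opN M * frobN N := mul_nonneg (opN_nonneg M) (frobN_nonneg N)
  have key : ∑ i, ∑ j, ((M * N) i j) ^ 2 ≤ (opN M * frobN N) ^ 2 := by
    have hcol : ∀ j : Fin n,
        ∑ i, ((M * N) i j) ^ 2 ≤ (opN M) ^ 2 * ∑ k, (N k j) ^ 2 := by
      intro j
      set x : EuclideanSpace ℝ (Fin n) :=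
        (WithLp.equiv 2 (Fin n → ℝ)).symm (fun k => N k j) with hx
      have hle : ‖(EuclideanSpace.equiv (Fin n) ℝ).symm (M *ᵥ x)‖ ≤ ‖M‖ * ‖x‖ :=
        Matrix.l2_opNorm_mulVec M x
      have hsq : ‖(EuclideanSpace.equiv (Fin n) ℝ).symm (M *ᵥ x)‖ ^ 2
          ≤ (‖M‖ * ‖x‖) ^ 2 := pow_le_pow_left₀ (norm_nonneg _) hle 2
      have h1 : ‖(EuclideanSpace.equiv (Fin n) ℝ).symm (M *ᵥ x)‖ ^ 2
          = ∑ i, ((M * N) i j) ^ 2 := by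
        rw [EuclideanSpace.norm_eq, Real.sq_sqrt (by positivity)]
        refine Finset.sum_congr rfl fun i _ => ?_
        simp [hx, Matrix.mulVec, Matrix.mul_apply, dotProduct, sq_abs,
          Real.norm_eq_abs]
      have h2 : ‖x‖ ^ 2 = ∑ k, (N k j) ^ 2 := by
        rw [EuclideanSpace.norm_eq, Real.sq_sqrt (by positivity)]
        refine Finset.sum_congr rfl fun k _ => ?_
        simp [hx, sq_abs, Real.norm_eq_abs]
      calc ∑ i, ((M * N) i j) ^ 2 = ‖(EuclideanSpace.equiv (Fin n) ℝ).symm (M *ᵥ x)‖ ^ 2 :=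
            h1.symm
        _ ≤ (‖M‖ * ‖x‖) ^ 2 := hsq
        _ = (opN M) ^ 2 * ∑ k, (N k j) ^ 2 := by rw [mul_pow, h2, opN_eq]
    calc ∑ i, ∑ j, ((M * N) i j) ^ 2 = ∑ j, ∑ i, ((M * N) i j) ^ 2 :=
          Finset.sum_comm
      _ ≤ ∑ j, (opN M) ^ 2 * ∑ k, (N k j) ^ 2 := Finset.sum_le_sum fun j _ => hcol j
      _ = (opN M) ^ 2 * ∑ j, ∑ k, (N k j) ^ 2 := by rw [Finset.mul_sum]
      _ = (opN M) ^ 2 * (frobN N) ^ 2 := by rw [frobN_sq, Finset.sum_comm]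
      _ = (opN M * frobN N) ^ 2 := (mul_pow _ _ _).symm
  have := Real.sqrt_le_sqrt key
  rw [← frobN] at this
  calc frobN (M * N) ≤ Real.sqrt ((opN M * frobN N) ^ 2) := this
    _ = opN M * frobN N := Real.sqrt_sq hrhs

lemma frobN_mul_right {n : ℕ} (N W : Matrix (Fin n) (Fin n) ℝ) :
    frobN (N * W) ≤ frobN N * opN W := by
  calc frobN (N * W) = frobN ((N * W)ᵀ) := (frobN_transpose _).symm
    _ = frobN (Wᵀ * Nᵀ) := by rw [Matrix.transpose_mul]
    _ ≤ opN Wᵀ * frobN Nᵀ := frobN_mul_left _ _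
    _ = frobN N * opN W := by rw [opN_transpose, frobN_transpose, mul_comm]

lemma frobN_map_sub_le {n : ℕ} (σ : ℝ → ℝ) (hσ : LipschitzWith 1 σ)
    (X Y : Matrix (Fin n) (Fin n) ℝ) :
    frobN (X.map σ - Y.map σ) ≤ frobN (X - Y) := by
  apply Real.sqrt_le_sqrt
  refine Finset.sum_le_sum fun i _ => Finset.sum_le_sum fun j _ => ?_
  have habs : |σ (X i j) - σ (Y i j)| ≤ |X i j - Y i j| := by
    have := hσ.dist_le_mul (X i j) (Y i j)
    simpa [Real.dist_eq] using this
  calc ((X.map σ - Y.map σ) i j) ^ 2 = |σ (X i j) - σ (Y i j)| ^ 2 := by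
        simp [Matrix.map_apply, sq_abs]
    _ ≤ |X i j - Y i j| ^ 2 := pow_le_pow_left₀ (abs_nonneg _) habs 2
    _ = ((X - Y) i j) ^ 2 := by simp [sq_abs]

lemma frobN_map_le {n : ℕ} (σ : ℝ → ℝ) (hσ : LipschitzWith 1 σ) (hσ0 : σ 0 = 0)
    (X : Matrix (Fin n) (Fin n) ℝ) :
    frobN (X.map σ) ≤ frobN X := by
  have h0 : (0 : Matrix (Fin n) (Fin n) ℝ).map σ = 0 := by
    ext i j; simp [Matrix.map_apply, hσ0]
  have := frobN_map_sub_le σ hσ X 0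
  rwa [h0, sub_zero, sub_zero] at this

/-- Lipschitz stability of a `T`-layer message-passing network: perturbing the
(symmetric, norm-≤1) propagation operator from `Ã` to `Ã'` changes the output
embeddings by at most `T · ‖Ã' − Ã‖₂ · ∏ ‖W_ℓ‖₂ · ‖H₀‖`. -/
theorem gnn_output_stability_under_operator_perturbation
    {n : ℕ} (A A' : Matrix (Fin n) (Fin n) ℝ)
    (hA : A.IsSymm) (hA' : A'.IsSymm)
    (hAn : opN A ≤ 1) (hA'n : opN A' ≤ 1)
    (W : ℕ → Matrix (Fin n) (Fin n) ℝ)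
    (σ : ℝ → ℝ) (hσ : LipschitzWith 1 σ) (hσ0 : σ 0 = 0)
    (H₀ : Matrix (Fin n) (Fin n) ℝ)
    (H H' : ℕ → Matrix (Fin n) (Fin n) ℝ)
    (hH0 : H 0 = H₀) (hH'0 : H' 0 = H₀)
    (hH : ∀ ℓ : ℕ, H (ℓ + 1) = (A * H ℓ * W (ℓ + 1)).map σ)
    (hH' : ∀ ℓ : ℕ, H' (ℓ + 1) = (A' * H' ℓ * W (ℓ + 1)).map σ)
    (T : ℕ) :
    frobN (H' T - H T)
      ≤ (T : ℝ) * opN (A' - A) * (∏ ℓ ∈ Finset.range T, opN (W (ℓ + 1)))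
          * frobN H₀ := by
  -- growth bound on the unperturbed trajectory
  have hgrow : ∀ ℓ : ℕ,
      frobN (H ℓ) ≤ (∏ i ∈ Finset.range ℓ, opN (W (i + 1))) * frobN H₀ := by
    intro ℓ
    induction ℓ with
    | zero => simp [hH0]
    | succ ℓ ih =>
      have hP : 0 ≤ ∏ i ∈ Finset.range ℓ, opN (W (i + 1)) :=
        Finset.prod_nonneg fun i _ => opN_nonneg _
      calc frobN (H (ℓ + 1)) = frobN ((A * H ℓ * W (ℓ + 1)).map σ) := by rw [hH]
        _ ≤ frobN (A * H ℓ * W (ℓ + 1)) := frobN_map_le σ hσ hσ0 _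
        _ ≤ frobN (A * H ℓ) * opN (W (ℓ + 1)) := frobN_mul_right _ _
        _ ≤ (opN A * frobN (H ℓ)) * opN (W (ℓ + 1)) := by
            have := frobN_mul_left A (H ℓ)
            exact mul_le_mul_of_nonneg_right this (opN_nonneg _)
        _ ≤ (1 * frobN (H ℓ)) * opN (W (ℓ + 1)) := by
            have := mul_le_mul_of_nonneg_right hAn (frobN_nonneg (H ℓ))
            exact mul_le_mul_of_nonneg_right this (opN_nonneg _)
        _ = frobN (H ℓ) * opN (W (ℓ + 1)) := by ring
        _ ≤ ((∏ i ∈ Finset.range ℓ, opN (W (i + 1))) * frobN H₀) * opN (W (ℓ + 1)) :=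
            mul_le_mul_of_nonneg_right ih (opN_nonneg _)
        _ = (∏ i ∈ Finset.range (ℓ + 1), opN (W (i + 1))) * frobN H₀ := by
            rw [Finset.prod_range_succ]; ring
  induction T with
  | zero => simp [hH0, hH'0, frobN]
  | succ T ih =>
    have hP : 0 ≤ ∏ i ∈ Finset.range T, opN (W (i + 1)) :=
      Finset.prod_nonneg fun i _ => opN_nonneg _
    have ha : 0 ≤ opN (A' - A) := opN_nonneg _
    have hw : 0 ≤ opN (W (T + 1)) := opN_nonneg _
    have hh0 : 0 ≤ frobN H₀ := frobN_nonneg _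
    have hdecomp :
        A' * H' T * W (T + 1) - A * H T * W (T + 1)
          = (A' - A) * H T * W (T + 1) + A' * (H' T - H T) * W (T + 1) := by
      noncomm_ring
    have b1 : frobN ((A' - A) * H T * W (T + 1))
        ≤ opN (A' - A) * ((∏ i ∈ Finset.range T, opN (W (i + 1))) * frobN H₀)
            * opN (W (T + 1)) := by
      calc frobN ((A' - A) * H T * W (T + 1))
          ≤ frobN ((A' - A) * H T) * opN (W (T + 1)) := frobN_mul_right _ _
        _ ≤ (opN (A' - A) * frobN (H T)) * opN (W (T + 1)) :=
            mul_le_mul_of_nonneg_right (frobN_mul_left _ _) hw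
        _ ≤ (opN (A' - A) * ((∏ i ∈ Finset.range T, opN (W (i + 1))) * frobN H₀))
              * opN (W (T + 1)) := by
            have := mul_le_mul_of_nonneg_left (hgrow T) ha
            exact mul_le_mul_of_nonneg_right this hw
    have b2 : frobN (A' * (H' T - H T) * W (T + 1))
        ≤ frobN (H' T - H T) * opN (W (T + 1)) := by
      calc frobN (A' * (H' T - H T) * W (T + 1))
          ≤ frobN (A' * (H' T - H T)) * opN (W (T + 1)) := frobN_mul_right _ _
        _ ≤ (opN A' * frobN (H' T - H T)) * opN (W (T + 1)) :=
            mul_le_mul_of_nonneg_right (frobN_mul_left _ _) hw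
        _ ≤ (1 * frobN (H' T - H T)) * opN (W (T + 1)) := by
            have := mul_le_mul_of_nonneg_right hA'n (frobN_nonneg (H' T - H T))
            exact mul_le_mul_of_nonneg_right this hw
        _ = frobN (H' T - H T) * opN (W (T + 1)) := by ring
    have step : frobN (H' (T + 1) - H (T + 1))
        ≤ frobN ((A' - A) * H T * W (T + 1)) + frobN (A' * (H' T - H T) * W (T + 1)) := by
      calc frobN (H' (T + 1) - H (T + 1))
          = frobN ((A' * H' T * W (T + 1)).map σ - (A * H T * W (T + 1)).map σ) := by
            rw [hH, hH']
        _ ≤ frobN (A' * H' T * W (T + 1) - A * H T * W (T + 1)) :=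
            frobN_map_sub_le σ hσ _ _
        _ = frobN ((A' - A) * H T * W (T + 1) + A' * (H' T - H T) * W (T + 1)) := by
            rw [hdecomp]
        _ ≤ _ := frobN_add_le _ _
    have ihw : frobN (H' T - H T) * opN (W (T + 1))
        ≤ ((T : ℝ) * opN (A' - A) * (∏ i ∈ Finset.range T, opN (W (i + 1))) * frobN H₀)
            * opN (W (T + 1)) :=
      mul_le_mul_of_nonneg_right ih hw
    rw [Finset.prod_range_succ]
    push_cast
    nlinarith [b1, b2, step, ihw]
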